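/- Let c be any of the three reachability criteria c_All, c_None, c_Match. For every SPARQL graph pattern P there exists an LDQL query q such that [[P]]_{c,S}^W = ⟦q⟧_W^S for every Web of Linked Data W and every finite set S of URIs. -/

import Mathlib

namespace LDQLFormal

noncomputable section
open Classical

/-! ### Basic RDF model -/

abbrev URI := ℕ
abbrev BNodeId := ℕ
abbrev LitId := ℕ
abbrev Var := ℕ
abbrev Doc := ℕ

/-- Subject terms: URIs or blank nodes. -/
inductive Subj where
  | uri (u : URI)
  | bnode (b : BNodeId)
deriving DecidableEq

/-- RDF terms (objects): URIs, blank nodes, or literals. -/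
inductive Obj where
  | uri (u : URI)
  | bnode (b : BNodeId)
  | lit (l : LitId)
deriving DecidableEq

structure RDFTriple where
  s : Subj
  p : URI
  o : Obj
deriving DecidableEq

def Subj.toObj : Subj → Obj
  | .uri u => .uri u
  | .bnode b => .bnode b

/-- The set of URIs occurring in an RDF triple. -/
def urisOf (t : RDFTriple) : Set URI :=
  {u | t.s = .uri u ∨ t.p = u ∨ t.o = .uri u}

/-- A Web of Linked Data: a finite set of documents, the data in each
document (a finite set of RDF triples), and a surjective partial function
`adoc` from URIs to documents. -/
structure Web where
  docs : Set Doc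
  finite_docs : docs.Finite
  data : Doc → Finset RDFTriple
  adoc : URI → Option Doc
  adoc_mem : ∀ u d, adoc u = some d → d ∈ docs
  adoc_surj : ∀ d ∈ docs, ∃ u, adoc u = some d

/-- Link graph edge `(d, (t,u), d')`. -/
def Web.edge (W : Web) (d : Doc) (t : RDFTriple) (u : URI) (d' : Doc) : Prop :=
  d ∈ W.docs ∧ t ∈ W.data d ∧ u ∈ urisOf t ∧ W.adoc u = some d'

/-! ### Link patterns -/

/-- Components of a link pattern drawn from `U ∪ {*, +}`. -/
inductive LPUP where
  | uri (u : URI)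
  | star
  | plus
deriving DecidableEq

/-- Components of a link pattern drawn from `U ∪ Lit ∪ {*, +}`. -/
inductive LPULP where
  | uri (u : URI)
  | lit (l : LitId)
  | star
  | plus
deriving DecidableEq

structure LinkPattern where
  c1 : LPUP
  c2 : LPUP
  c3 : LPULP

def matchSubj (y : LPUP) (uctx : URI) (x : Subj) : Prop :=
  match y with
  | .uri w => x = .uri w
  | .star => True
  | .plus => x = .uri uctx

def matchPred (y : LPUP) (uctx : URI) (x : URI) : Prop :=
  match y with
  | .uri w => x = w
  | .star => True
  | .plus => x = uctx

def matchObj (y : LPULP) (uctx : URI) (x : Obj) : Prop :=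
  match y with
  | .uri w => x = .uri w
  | .lit l => x = .lit l
  | .star => True
  | .plus => x = .uri uctx

/-- An edge with label `(t,u)` matches a link pattern in the context of `uctx`. -/
def lpMatch (lp : LinkPattern) (uctx : URI) (t : RDFTriple) (u : URI) : Prop :=
  ((lp.c1 = .star ∧ t.s = .uri u) ∨ (lp.c2 = .star ∧ t.p = u) ∨ (lp.c3 = .star ∧ t.o = .uri u))
  ∧ matchSubj lp.c1 uctx t.s ∧ matchPred lp.c2 uctx t.p ∧ matchObj lp.c3 uctx t.o

/-! ### Solution mappings -/

abbrev Mapping := Var → Option Obj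

def mdom (μ : Mapping) : Set Var := {v | μ v ≠ none}

def emptyMap : Mapping := fun _ => none

def single (v : Var) (o : Obj) : Mapping := fun w => if w = v then some o else none

def compatible (μ1 μ2 : Mapping) : Prop :=
  ∀ v a b, μ1 v = some a → μ2 v = some b → a = b

def munion (μ1 μ2 : Mapping) : Mapping := fun v =>
  match μ1 v with
  | some a => some a
  | none => μ2 v

/-- Join of two sets of solution mappings. -/
def mjoin (Ω1 Ω2 : Set Mapping) : Set Mapping :=
  {μ | ∃ μ1 ∈ Ω1, ∃ μ2 ∈ Ω2, compatible μ1 μ2 ∧ μ = munion μ1 μ2}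

/-- Restriction of a mapping to a finite set of variables. -/
def restrictV (V : Finset Var) (μ : Mapping) : Mapping := fun v =>
  if v ∈ V then μ v else none

/-! ### SPARQL graph patterns -/

inductive PTerm where
  | var (v : Var)
  | term (o : Obj)
deriving DecidableEq

structure TriplePattern where
  sj : PTerm
  pr : PTerm
  ob : PTerm
deriving DecidableEq

def PTerm.varsOf : PTerm → Set Var
  | .var v => {v}
  | .term _ => ∅

def TriplePattern.varsOf (t : TriplePattern) : Set Var :=
  t.sj.varsOf ∪ t.pr.varsOf ∪ t.ob.varsOf

def pval (μ : Mapping) : PTerm → Option Obj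
  | .var v => μ v
  | .term o => some o

def objToSubj : Obj → Option Subj
  | .uri u => some (.uri u)
  | .bnode b => some (.bnode b)
  | .lit _ => none

def objToURI : Obj → Option URI
  | .uri u => some u
  | _ => none

/-- `tpInst μ tp = some t` iff `μ[tp] = t` (all variables of `tp` bound by `μ`
and the instantiation is a well-formed RDF triple). -/
def tpInst (μ : Mapping) (t : TriplePattern) : Option RDFTriple := do
  let s ← pval μ t.sj
  let s' ← objToSubj s
  let p ← pval μ t.pr
  let p' ← objToURI p
  let o ← pval μ t.ob
  return ⟨s', p', o⟩

/-- Filter conditions. -/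
inductive Cond where
  | eq (a b : PTerm)
  | neq (a b : PTerm)
  | and (c1 c2 : Cond)
  | or (c1 c2 : Cond)
  | not (c : Cond)

def condHolds (μ : Mapping) : Cond → Prop
  | .eq a b => ∃ x, pval μ a = some x ∧ pval μ b = some x
  | .neq a b => ∃ x y, pval μ a = some x ∧ pval μ b = some y ∧ x ≠ y
  | .and c1 c2 => condHolds μ c1 ∧ condHolds μ c2
  | .or c1 c2 => condHolds μ c1 ∨ condHolds μ c2
  | .not c => ¬ condHolds μ c

/-- SPARQL graph patterns, built from triple patterns with
AND, UNION, OPT, FILTER, GRAPH and BIND. -/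
inductive GP where
  | empty
  | tp (t : TriplePattern)
  | and (g1 g2 : GP)
  | union (g1 g2 : GP)
  | opt (g1 g2 : GP)
  | filter (g : GP) (c : Cond)
  | graphU (u : URI) (g : GP)
  | graphV (v : Var) (g : GP)
  | bind (g : GP) (o : Obj) (v : Var)

/-- An RDF dataset: a default graph together with named graphs. -/
structure RDFDataset where
  dflt : Set RDFTriple
  named : URI → Option (Set RDFTriple)

/-- Standard set-based SPARQL evaluation of a graph pattern over an RDF
dataset `D` with active graph `G`. -/
def evalGP (D : RDFDataset) : GP → Set RDFTriple → Set Mapping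
  | .empty, _ => {emptyMap}
  | .tp t, G => {μ | mdom μ = t.varsOf ∧ ∃ tr ∈ G, tpInst μ t = some tr}
  | .and g1 g2, G => mjoin (evalGP D g1 G) (evalGP D g2 G)
  | .union g1 g2, G => evalGP D g1 G ∪ evalGP D g2 G
  | .opt g1 g2, G =>
      mjoin (evalGP D g1 G) (evalGP D g2 G) ∪
        {μ | μ ∈ evalGP D g1 G ∧ ∀ μ2 ∈ evalGP D g2 G, ¬ compatible μ μ2}
  | .filter g c, G => {μ | μ ∈ evalGP D g G ∧ condHolds μ c}
  | .graphU u g, _ => {μ | ∃ G', D.named u = some G' ∧ μ ∈ evalGP D g G'}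
  | .graphV v g, _ =>
      {μ | ∃ u G', D.named u = some G' ∧ ∃ μ' ∈ evalGP D g G',
            compatible μ' (single v (.uri u)) ∧ μ = munion μ' (single v (.uri u))}
  | .bind g o v, G => {μ' | ∃ μ ∈ evalGP D g G, μ v = none ∧ μ' = munion μ (single v o)}

/-! ### LDQL syntax -/

mutual
/-- LDQL queries. -/
inductive LDQL where
  | base (l : LPE) (P : GP)
  | seedU (U0 : Finset URI) (q : LDQL)
  | seedV (v : Var) (q : LDQL)
  | qand (q1 q2 : LDQL)
  | qunion (q1 q2 : LDQL)
  | proj (V0 : Finset Var) (q : LDQL)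

/-- Link path expressions. -/
inductive LPE where
  | eps
  | pat (lp : LinkPattern)
  | seq (l1 l2 : LPE)
  | alt (l1 l2 : LPE)
  | star (l : LPE)
  | test (l : LPE)
  | sub (v : Var) (q : LDQL)
end

/-- `dataset_W(U0)`. -/
def datasetW (W : Web) (U0 : Set URI) : RDFDataset where
  dflt := {t | ∃ u ∈ U0, ∃ d, W.adoc u = some d ∧ t ∈ W.data d}
  named := fun u =>
    if u ∈ U0 then (W.adoc u).map (fun d => ((W.data d : Finset RDFTriple) : Set RDFTriple))
    else none

/-! ### LDQL semantics -/

mutual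
/-- The S-based evaluation `⟦q⟧_W^S` of an LDQL query. -/
def evalQ (W : Web) : LDQL → Set URI → Set Mapping
  | .base l P, S =>
      evalGP (datasetW W {u' | ∃ u ∈ S, u' ∈ evalL W l u}) P
        (datasetW W {u' | ∃ u ∈ S, u' ∈ evalL W l u}).dflt
  | .seedU U0 q, _ => evalQ W q ↑U0
  | .seedV v q, _ => ⋃ u : URI, mjoin (evalQ W q {u}) {single v (.uri u)}
  | .qand q1 q2, S => mjoin (evalQ W q1 S) (evalQ W q2 S)
  | .qunion q1 q2, S => evalQ W q1 S ∪ evalQ W q2 S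
  | .proj V0 q, S => (restrictV V0) '' (evalQ W q S)

/-- The `uctx`-based evaluation `⟦l⟧_W^uctx` of a link path expression. -/
def evalL (W : Web) : LPE → URI → Set URI
  | .eps, u => if (W.adoc u).isSome then {u} else ∅
  | .pat lp, u =>
      {u' | ∃ d, W.adoc u = some d ∧ ∃ t d', W.edge d t u' d' ∧ lpMatch lp u t u'}
  | .seq l1 l2, u => {u'' | ∃ u', u' ∈ evalL W l1 u ∧ u'' ∈ evalL W l2 u'}
  | .alt l1 l2, u => evalL W l1 u ∪ evalL W l2 u
  | .star l, u =>
      {u' | (W.adoc u).isSome ∧ Relation.ReflTransGen (fun a b => b ∈ evalL W l a) u u'}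
  | .test l, u => {u' | u' = u ∧ evalL W l u ≠ ∅}
  | .sub v q, u =>
      {u' | (W.adoc u).isSome ∧ ∃ μ ∈ evalQ W q {u}, μ v = some (.uri u')}
end

/-- Semantic equivalence of LDQL queries. -/
def equivQ (q q' : LDQL) : Prop :=
  ∀ (W : Web) (S : Set URI), S.Finite → evalQ W q S = evalQ W q' S


/-! ### LPEs built only from ε, ⟨?v,q⟩ and (·)* -/

mutual
/-- All LPEs occurring in the query consist only of `ε`, `⟨?v,q⟩` and `(·)*`. -/
def LDQL.simple : LDQL → Prop
  | .base l _ => l.simple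
  | .seedU _ q => q.simple
  | .seedV _ q => q.simple
  | .qand q1 q2 => q1.simple ∧ q2.simple
  | .qunion q1 q2 => q1.simple ∧ q2.simple
  | .proj _ q => q.simple

/-- The LPE consists only of `ε`, `⟨?v,q⟩` and `(·)*`. -/
def LPE.simple : LPE → Prop
  | .eps => True
  | .pat _ => False
  | .seq _ _ => False
  | .alt _ _ => False
  | .star l => l.simple
  | .test _ => False
  | .sub _ q => q.simple
end

/-! ### Property paths under context-based semantics -/

/-- Property path expressions. -/
inductive PP where
  | uri (p : URI)
  | neg (us : List URI)
  | seq (r1 r2 : PP)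
  | alt (r1 r2 : PP)
  | star (r : PP)

/-- Terms allowed in PP-patterns: URIs, literals and variables. -/
inductive PPTerm where
  | uri (u : URI)
  | lit (l : LitId)
  | var (v : Var)

/-- The context selector `C_W`. -/
def CW (W : Web) (a : Obj) : Set RDFTriple :=
  {t | ∃ u d, a = .uri u ∧ W.adoc u = some d ∧ t ∈ W.data d ∧ t.s = .uri u}

/-- The RDF terms occurring in triples of documents of `W`. -/
def termsW (W : Web) : Set Obj :=
  {a | ∃ d ∈ W.docs, ∃ t ∈ W.data d, a = t.s.toObj ∨ a = .uri t.p ∨ a = t.o}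

/-- The binary relation on RDF terms induced by a PP expression under
context-based semantics. -/
def ppRel (W : Web) : PP → Obj → Obj → Prop
  | .uri p, a, b => ∃ s, objToSubj a = some s ∧ (⟨s, p, b⟩ : RDFTriple) ∈ CW W a
  | .neg us, a, b => ∃ p, p ∉ us ∧ ∃ s, objToSubj a = some s ∧ (⟨s, p, b⟩ : RDFTriple) ∈ CW W a
  | .seq r1 r2, a, b => ∃ m, ppRel W r1 a m ∧ ppRel W r2 m b
  | .alt r1 r2, a, b => ppRel W r1 a b ∨ ppRel W r2 a b
  | .star r, a, b => (a = b ∧ a ∈ termsW W) ∨ Relation.TransGen (ppRel W r) a b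

def PPTerm.toPval (μ : Mapping) : PPTerm → Option Obj
  | .uri u => some (.uri u)
  | .lit l => some (.lit l)
  | .var v => μ v

def ppVars (α β : PPTerm) : Set Var := {v | α = .var v ∨ β = .var v}

/-- The context-based evaluation `⟦(α,r,β)⟧_ctxt^W` of a PP-pattern. -/
def ctxtEvalPat (W : Web) (α : PPTerm) (r : PP) (β : PPTerm) : Set Mapping :=
  {μ | mdom μ = ppVars α β ∧
    ∃ a b, α.toPval μ = some a ∧ β.toPval μ = some b ∧ ppRel W r a b}

/-- PP-based SPARQL queries. -/
inductive PPQ where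
  | pat (α : PPTerm) (r : PP) (β : PPTerm)
  | and (R1 R2 : PPQ)
  | union (R1 R2 : PPQ)
  | opt (R1 R2 : PPQ)
  | filter (R : PPQ) (c : Cond)

/-- The context-based evaluation `⟦R⟧_ctxt^W` of a PP-based SPARQL query. -/
def evalPPQ (W : Web) : PPQ → Set Mapping
  | .pat α r β => ctxtEvalPat W α r β
  | .and R1 R2 => mjoin (evalPPQ W R1) (evalPPQ W R2)
  | .union R1 R2 => evalPPQ W R1 ∪ evalPPQ W R2
  | .opt R1 R2 =>
      mjoin (evalPPQ W R1) (evalPPQ W R2) ∪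
        {μ | μ ∈ evalPPQ W R1 ∧ ∀ μ2 ∈ evalPPQ W R2, ¬ compatible μ μ2}
  | .filter R c => {μ | μ ∈ evalPPQ W R ∧ condHolds μ c}

/-! ### NautiLOD -/

/-- NautiLOD expressions (without action rules). -/
inductive NLOD where
  | fwd (p : URI)
  | bwd (p : URI)
  | any
  | seq (n1 n2 : NLOD)
  | alt (n1 n2 : NLOD)
  | star (n : NLOD)
  | ask (n : NLOD) (P : GP)

/-- Dataset used for evaluating an ASK pattern over the data of a single document. -/
def askDS (W : Web) (d : Doc) : RDFDataset :=
  ⟨((W.data d : Finset RDFTriple) : Set RDFTriple), fun _ => none⟩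

/-- NautiLOD semantics `⟦n⟧_W^u`. -/
def nlEval (W : Web) : NLOD → URI → Set URI
  | .fwd p, u => {u' | ∃ d, W.adoc u = some d ∧ (⟨.uri u, p, .uri u'⟩ : RDFTriple) ∈ W.data d}
  | .bwd p, u => {u' | ∃ d, W.adoc u = some d ∧ (⟨.uri u', p, .uri u⟩ : RDFTriple) ∈ W.data d}
  | .any, u => {u' | ∃ d q, W.adoc u = some d ∧ (⟨.uri u, q, .uri u'⟩ : RDFTriple) ∈ W.data d}
  | .seq n1 n2, u =>
      {u'' | ∃ u', u' ∈ nlEval W n1 u ∧ (W.adoc u').isSome ∧ u'' ∈ nlEval W n2 u'}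
  | .alt n1 n2, u => nlEval W n1 u ∪ nlEval W n2 u
  | .star n, u =>
      {u' | Relation.ReflTransGen (fun a b => (W.adoc a).isSome ∧ b ∈ nlEval W n a) u u'}
  | .ask n P, u =>
      {u' | u' ∈ nlEval W n u ∧
        ∃ d, W.adoc u' = some d ∧ evalGP (askDS W d) P ((W.data d : Finset RDFTriple) : Set RDFTriple) ≠ ∅}

/-! ### Variables occurring in patterns and NautiLOD expressions -/

def condHasVar (v : Var) : Cond → Prop
  | .eq a b => a = .var v ∨ b = .var v
  | .neq a b => a = .var v ∨ b = .var v
  | .and c1 c2 => condHasVar v c1 ∨ condHasVar v c2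
  | .or c1 c2 => condHasVar v c1 ∨ condHasVar v c2
  | .not c => condHasVar v c

/-- The variable `v` occurs in the SPARQL graph pattern. -/
def gpHasVar (v : Var) : GP → Prop
  | .empty => False
  | .tp t => t.sj = .var v ∨ t.pr = .var v ∨ t.ob = .var v
  | .and g1 g2 => gpHasVar v g1 ∨ gpHasVar v g2
  | .union g1 g2 => gpHasVar v g1 ∨ gpHasVar v g2
  | .opt g1 g2 => gpHasVar v g1 ∨ gpHasVar v g2
  | .filter g c => gpHasVar v g ∨ condHasVar v c
  | .graphU _ g => gpHasVar v g
  | .graphV w g => v = w ∨ gpHasVar v g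
  | .bind g _ w => v = w ∨ gpHasVar v g

/-- The variable `v` occurs in the NautiLOD expression. -/
def nlodHasVar (v : Var) : NLOD → Prop
  | .fwd _ => False
  | .bwd _ => False
  | .any => False
  | .seq n1 n2 => nlodHasVar v n1 ∨ nlodHasVar v n2
  | .alt n1 n2 => nlodHasVar v n1 ∨ nlodHasVar v n2
  | .star n => nlodHasVar v n
  | .ask n P => nlodHasVar v n ∨ gpHasVar v P

/-! ### Reachability-based query semantics -/

/-- A reachability criterion. -/
def ReachCrit := RDFTriple → URI → GP → Prop

def cAll : ReachCrit := fun _ _ _ => True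

def cNone : ReachCrit := fun _ _ _ => False

/-- The list of triple patterns occurring in a SPARQL graph pattern. -/
def GP.tps : GP → List TriplePattern
  | .empty => []
  | .tp t => [t]
  | .and g1 g2 => g1.tps ++ g2.tps
  | .union g1 g2 => g1.tps ++ g2.tps
  | .opt g1 g2 => g1.tps ++ g2.tps
  | .filter g _ => g.tps
  | .graphU _ g => g.tps
  | .graphV _ g => g.tps
  | .bind g _ _ => g.tps

def cMatch : ReachCrit := fun t _ P => ∃ (μ : Mapping) (tp : TriplePattern),
  tp ∈ P.tps ∧ tpInst μ tp = some t

/-- `(c,S,P)`-reachability of a document in `W`. -/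
inductive Reachable (W : Web) (c : ReachCrit) (S : Set URI) (P : GP) : Doc → Prop where
  | seed (u : URI) (d : Doc) : u ∈ S → W.adoc u = some d → Reachable W c S P d
  | step (dsrc : Doc) (t : RDFTriple) (u : URI) (d : Doc) :
      Reachable W c S P dsrc → W.edge dsrc t u d → c t u P → Reachable W c S P d

/-- The RDF graph consisting of all triples of all `(c,S,P)`-reachable documents. -/
def reachGraph (W : Web) (c : ReachCrit) (S : Set URI) (P : GP) : Set RDFTriple :=
  {t | ∃ d, Reachable W c S P d ∧ t ∈ W.data d}

/-- The S-based evaluation of `P` over `W` under `c`-semantics. -/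
def reachEval (W : Web) (c : ReachCrit) (S : Set URI) (P : GP) : Set Mapping :=
  evalGP ⟨reachGraph W c S P, fun _ => none⟩ P (reachGraph W c S P)

/-! ### Constructions used in Theorems on c_Match and NautiLOD -/

def addFilter (v : Var) (pt : PTerm) (g : GP) : GP :=
  match pt with
  | .var _ => g
  | .term o => .filter g (.eq (.var v) (.term o))

/-- The basic LDQL query `q_k = ⟨ε,P_k⟩` associated with a triple pattern. -/
def matchQ (vs vp vo : Var) (t : TriplePattern) : LDQL :=
  .base .eps (addFilter vo t.ob (addFilter vp t.pr (addFilter vs t.sj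
    (.tp ⟨.var vs, .var vp, .var vo⟩))))

/-- An LPE whose evaluation is empty everywhere. -/
def emptyLPE (v : Var) : LPE := .sub v (.base .eps .empty)

/-- The LPE `l_Match` associated with a SPARQL graph pattern. -/
def lMatch (vs vp vo : Var) (P : GP) : LPE :=
  .star ((P.tps.map (fun t =>
      LPE.alt (.sub vs (matchQ vs vp vo t))
        (LPE.alt (.sub vp (matchQ vs vp vo t)) (.sub vo (matchQ vs vp vo t))))).foldr
    LPE.alt (emptyLPE vs))

/-- The translation `trans_N` from NautiLOD expressions to LPEs, using the
(fresh, pairwise distinct) variables `vx`, `vu`, `vp`. -/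
def transN (vx vu vp : Var) : NLOD → LPE
  | .fwd p => .pat ⟨.plus, .uri p, .star⟩
  | .bwd p => .pat ⟨.star, .uri p, .plus⟩
  | .any => .sub vx (.base .eps (.graphV vu (.tp ⟨.var vu, .var vp, .var vx⟩)))
  | .seq n1 n2 => .seq (transN vx vu vp n1) (transN vx vu vp n2)
  | .alt n1 n2 => .alt (transN vx vu vp n1) (transN vx vu vp n2)
  | .star n => .star (transN vx vu vp n)
  | .ask n P => .seq (transN vx vu vp n) (.test (.sub vx (.base .eps (.graphV vx P))))


/-! ### Auxiliary development -/

/-- A graph pattern whose evaluation is always empty. -/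
def falseGP : GP := .filter .empty (.neq (.term (.uri 0)) (.term (.uri 0)))

lemma evalGP_falseGP (D : RDFDataset) (G : Set RDFTriple) : evalGP D falseGP G = ∅ := by
  ext μ; simp [falseGP, evalGP, condHolds, pval]

/-- Replace GRAPH subpatterns by `falseGP`. -/
def strip : GP → GP
  | .empty => .empty
  | .tp t => .tp t
  | .and g1 g2 => .and (strip g1) (strip g2)
  | .union g1 g2 => .union (strip g1) (strip g2)
  | .opt g1 g2 => .opt (strip g1) (strip g2)
  | .filter g c => .filter (strip g) c
  | .graphU _ _ => falseGP
  | .graphV _ _ => falseGP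
  | .bind g o v => .bind (strip g) o v

lemma evalGP_strip (D D₀ : RDFDataset) (h : D₀.named = fun _ => none) :
    ∀ (g : GP) (G : Set RDFTriple), evalGP D (strip g) G = evalGP D₀ g G := by
  intro g
  induction g with
  | empty => intro G; rfl
  | tp t => intro G; rfl
  | and g1 g2 ih1 ih2 => intro G; simp [strip, evalGP, ih1, ih2]
  | union g1 g2 ih1 ih2 => intro G; simp [strip, evalGP, ih1, ih2]
  | opt g1 g2 ih1 ih2 => intro G; simp [strip, evalGP, ih1, ih2]
  | filter g c ih => intro G; simp [strip, evalGP, ih]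
  | graphU u g ih => intro G; simp [strip, evalGP, falseGP, condHolds, pval, h]
  | graphV v g ih => intro G; simp [strip, evalGP, falseGP, condHolds, pval, h]
  | bind g o v ih => intro G; simp [strip, evalGP, ih]

lemma main_red (c : ReachCrit) (P : GP) (l : LPE)
    (h : ∀ (W : Web) (S : Set URI),
      reachGraph W c S P = (datasetW W {u' | ∃ u ∈ S, u' ∈ evalL W l u}).dflt) :
    ∀ (W : Web) (S : Set URI), S.Finite →
      reachEval W c S P = evalQ W (.base l (strip P)) S := by
  intro W S _
  have hq : evalQ W (.base l (strip P)) S =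
      evalGP (datasetW W {u' | ∃ u ∈ S, u' ∈ evalL W l u}) (strip P)
        (datasetW W {u' | ∃ u ∈ S, u' ∈ evalL W l u}).dflt := by
    simp [evalQ]
  rw [hq, evalGP_strip _ ⟨reachGraph W c S P, fun _ => none⟩ rfl, ← h]
  rfl
lemma reach_none (P : GP) (W : Web) (S : Set URI) :
    reachGraph W cNone S P = (datasetW W {u' | ∃ u ∈ S, u' ∈ evalL W .eps u}).dflt := by
  ext t
  constructor
  · rintro ⟨d, hr, ht⟩
    induction hr with
    | seed u d hu ha => exact ⟨u, ⟨u, hu, by simp [evalL, ha]⟩, d, ha, ht⟩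
    | step _ _ _ _ _ _ hc => exact hc.elim
  · rintro ⟨u', ⟨u, hu, he⟩, d, ha, ht⟩
    simp only [evalL] at he
    split at he
    · have heq : u' = u := he
      rw [heq] at ha
      exact ⟨d, .seed u d hu ha, ht⟩
    · exact absurd he (Set.notMem_empty _)
/-! ### c_All -/

def allPat : LinkPattern := ⟨.star, .star, .star⟩

lemma urisOf_cases {t : RDFTriple} {b : URI} (h : b ∈ urisOf t) :
    t.s = .uri b ∨ t.p = b ∨ t.o = .uri b := h

lemma evalL_allPat (W : Web) (a : URI) :
    evalL W (.pat allPat) a = {b | ∃ d, W.adoc a = some d ∧ ∃ t d', W.edge d t b d'} := by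
  ext b
  simp only [evalL, Set.mem_setOf_eq]
  constructor
  · rintro ⟨d, hd, t, d', he, -⟩
    exact ⟨d, hd, t, d', he⟩
  · rintro ⟨d, hd, t, d', he⟩
    refine ⟨d, hd, t, d', he, ?_, trivial, trivial, trivial⟩
    rcases urisOf_cases he.2.2.1 with h | h | h
    · exact Or.inl ⟨rfl, h⟩
    · exact Or.inr (Or.inl ⟨rfl, h⟩)
    · exact Or.inr (Or.inr ⟨rfl, h⟩)

def lAll : LPE := .star (.pat allPat)

lemma reach_all (P : GP) (W : Web) (S : Set URI) :
    reachGraph W cAll S P = (datasetW W {u' | ∃ u ∈ S, u' ∈ evalL W lAll u}).dflt := by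
  have hmem : ∀ u u', u' ∈ evalL W lAll u ↔ (W.adoc u).isSome ∧
      Relation.ReflTransGen (fun a b => b ∈ evalL W (.pat allPat) a) u u' := fun _ _ => Iff.rfl
  ext t
  constructor
  · rintro ⟨d, hr, ht⟩
    suffices h : ∃ u ∈ S, (W.adoc u).isSome ∧ ∃ u',
        Relation.ReflTransGen (fun a b => b ∈ evalL W (.pat allPat) a) u u' ∧
        W.adoc u' = some d by
      obtain ⟨u, hu, hs, u', hrt, ha⟩ := h
      exact ⟨u', ⟨u, hu, (hmem u u').mpr ⟨hs, hrt⟩⟩, d, ha, ht⟩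
    clear ht
    induction hr with
    | seed u d hu ha => exact ⟨u, hu, by simp [ha], u, .refl, ha⟩
    | step dsrc t' u d hre hedge _ ih =>
      obtain ⟨u0, hu0, hs, u1, hrt, ha1⟩ := ih
      refine ⟨u0, hu0, hs, u, hrt.tail ?_, hedge.2.2.2⟩
      rw [evalL_allPat]
      exact ⟨dsrc, ha1, t', d, hedge⟩
  · rintro ⟨u', ⟨u, hu, he⟩, d, ha, ht⟩
    obtain ⟨hs, hrt⟩ := (hmem u u').mp he
    refine ⟨d, ?_, ht⟩
    clear ht
    have key : ∀ u'', Relation.ReflTransGen (fun a b => b ∈ evalL W (.pat allPat) a) u u'' →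
        ∀ d', W.adoc u'' = some d' → Reachable W cAll S P d' := by
      intro u'' hrt'
      induction hrt' with
      | refl => intro d' ha'; exact .seed u d' hu ha'
      | @tail b c h1 h2 ih =>
        intro d' ha'
        rw [evalL_allPat] at h2
        obtain ⟨db, hab, t', d'', hedge⟩ := h2
        have hdb := ih db hab
        have hdd : d'' = d' := Option.some_injective _ (hedge.2.2.2 ▸ ha')
        exact hdd ▸ Reachable.step db t' c d'' hdb hedge trivial
    exact key u' hrt d ha
/-! ### c_Match -/

def matchesTP (tp : TriplePattern) (tr : RDFTriple) : Prop := ∃ μ, tpInst μ tp = some tr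

lemma tpInst_eq_some_iff {μ : Mapping} {tp : TriplePattern} {tr : RDFTriple} :
    tpInst μ tp = some tr ↔
      ∃ so, pval μ tp.sj = some so ∧ objToSubj so = some tr.s ∧
      ∃ po, pval μ tp.pr = some po ∧ objToURI po = some tr.p ∧
      pval μ tp.ob = some tr.o := by
  obtain ⟨s, p, o⟩ := tr
  simp only [tpInst, Option.bind_eq_bind, Option.bind_eq_some_iff, Option.some.injEq]
  constructor
  · rintro ⟨so, hso, s', hs', po, hpo, p', hp', oo, hoo, heq⟩
    cases heq
    exact ⟨so, hso, hs', po, hpo, hp', hoo⟩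
  · rintro ⟨so, hso, hs', po, hpo, hp', hoo⟩
    exact ⟨so, hso, s, hs', po, hpo, p, hp', o, hoo, rfl⟩

lemma objToSubj_eq_some_uri {so : Obj} {b : URI} :
    objToSubj so = some (.uri b) ↔ so = .uri b := by
  cases so <;> simp [objToSubj]

lemma objToURI_eq_some {so : Obj} {p : URI} : objToURI so = some p ↔ so = .uri p := by
  cases so <;> simp [objToURI]

def varBound : PTerm → ℕ
  | .var v => v + 1
  | .term _ => 0

/-- A variable not occurring in the triple pattern. -/
def vfr (t : TriplePattern) : Var :=
  max (max (varBound t.sj) (varBound t.pr)) (varBound t.ob)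

lemma mem_varsOf {pt : PTerm} {w : Var} : w ∈ pt.varsOf ↔ pt = .var w := by
  cases pt <;> simp [PTerm.varsOf, eq_comm]

lemma vfr_not_mem (t : TriplePattern) : vfr t ∉ t.varsOf := by
  intro h
  have h1 : varBound t.sj ≤ vfr t := le_trans (le_max_left _ _) (le_max_left _ _)
  have h2 : varBound t.pr ≤ vfr t := le_trans (le_max_right _ _) (le_max_left _ _)
  have h3 : varBound t.ob ≤ vfr t := le_max_right _ _
  rcases h with (h | h) | h <;> rw [mem_varsOf] at h
  · rw [h] at h1; simp [varBound] at h1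
  · rw [h] at h2; simp [varBound] at h2
  · rw [h] at h3; simp [varBound] at h3

lemma mdom_none {μ : Mapping} {tp : TriplePattern} (h : mdom μ = tp.varsOf) :
    μ (vfr tp) = none := by
  by_contra hne
  exact vfr_not_mem tp (h ▸ (hne : vfr tp ∈ mdom μ))

/-- Restriction of a mapping to the variables of a triple pattern. -/
def restr (tp : TriplePattern) (μ : Mapping) : Mapping :=
  fun w => if tp.sj = .var w ∨ tp.pr = .var w ∨ tp.ob = .var w then μ w else none

lemma restr_pval_sj (tp : TriplePattern) (μ : Mapping) :
    pval (restr tp μ) tp.sj = pval μ tp.sj := by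
  cases h : tp.sj with
  | var v => simp [pval, restr, h]
  | term o => simp [pval]

lemma restr_pval_pr (tp : TriplePattern) (μ : Mapping) :
    pval (restr tp μ) tp.pr = pval μ tp.pr := by
  cases h : tp.pr with
  | var v => simp [pval, restr, h]
  | term o => simp [pval]

lemma restr_pval_ob (tp : TriplePattern) (μ : Mapping) :
    pval (restr tp μ) tp.ob = pval μ tp.ob := by
  cases h : tp.ob with
  | var v => simp [pval, restr, h]
  | term o => simp [pval]

lemma restr_tpInst (tp : TriplePattern) (μ : Mapping) :
    tpInst (restr tp μ) tp = tpInst μ tp := by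
  simp only [tpInst, restr_pval_sj, restr_pval_pr, restr_pval_ob]

lemma restr_mdom {tp : TriplePattern} {μ : Mapping} {tr : RDFTriple}
    (h : tpInst μ tp = some tr) : mdom (restr tp μ) = tp.varsOf := by
  obtain ⟨so, hso, -, po, hpo, -, hoo⟩ := tpInst_eq_some_iff.mp h
  ext w
  simp only [mdom, Set.mem_setOf_eq, restr, TriplePattern.varsOf, Set.mem_union, mem_varsOf]
  constructor
  · intro hw
    by_contra hcon
    push_neg at hcon
    obtain ⟨⟨h1, h2⟩, h3⟩ := hcon
    simp [h1, h2, h3] at hw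
  · rintro ((hw | hw) | hw) <;> rw [if_pos]
    · rw [hw] at hso; simp [pval] at hso; simp [hso]
    · exact Or.inl hw
    · rw [hw] at hpo; simp [pval] at hpo; simp [hpo]
    · exact Or.inr (Or.inl hw)
    · rw [hw] at hoo; simp [pval] at hoo; simp [hoo]
    · exact Or.inr (Or.inr hw)
lemma evalQ_base_eps (W : Web) (g : GP) (a : URI) (d : Doc) (ha : W.adoc a = some d) :
    evalQ W (.base .eps g) {a} = evalGP (datasetW W {a}) g ↑(W.data d) := by
  have h1 : {u' | ∃ u ∈ ({a} : Set URI), u' ∈ evalL W .eps u} = {a} := by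
    ext u'; simp [evalL, ha]
  have h2 : (datasetW W ({a} : Set URI)).dflt = ↑(W.data d) := by
    ext t; simp [datasetW, ha]
  simp only [evalQ, h1, h2]

lemma evalL_sub_base (W : Web) (a : URI) (v : Var) (g : GP) :
    evalL W (.sub v (.base .eps g)) a =
      {b | ∃ d, W.adoc a = some d ∧
        ∃ μ ∈ evalGP (datasetW W {a}) g ↑(W.data d), μ v = some (.uri b)} := by
  ext b
  simp only [evalL, Set.mem_setOf_eq]
  constructor
  · rintro ⟨hs, μ, hμ, hv⟩
    obtain ⟨d, hd⟩ := Option.isSome_iff_exists.mp hs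
    rw [evalQ_base_eps W g a d hd] at hμ
    exact ⟨d, hd, μ, hμ, hv⟩
  · rintro ⟨d, hd, μ, hμ, hv⟩
    exact ⟨by simp [hd], μ, by rw [evalQ_base_eps W g a d hd]; exact hμ, hv⟩

lemma evalL_emptyLPE (W : Web) (v : Var) (u : URI) : evalL W (emptyLPE v) u = ∅ := by
  ext b
  simp [emptyLPE, evalL, evalQ, evalGP, emptyMap]
def constLPE (t : TriplePattern) (w : URI) : LPE :=
  .sub (vfr t) (.base .eps (.bind (.tp t) (.uri w) (vfr t)))

def posLPE (t : TriplePattern) : PTerm → LPE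
  | .var v => .sub v (.base .eps (.tp t))
  | .term (.uri w) => constLPE t w
  | .term _ => emptyLPE 0

def tpLPE (t : TriplePattern) : LPE :=
  .alt (posLPE t t.sj) (.alt (posLPE t t.pr) (posLPE t t.ob))

lemma subj_of_objToSubj {s : Subj} {b : URI} (h : objToSubj (.uri b) = some s) :
    s = .uri b := (Option.some.inj h).symm

lemma pred_of_objToURI {p b : URI} (h : objToURI (Obj.uri b) = some p) : p = b :=
  (Option.some.inj h).symm

lemma evalL_constLPE (W : Web) (a : URI) (tp : TriplePattern) (w : URI) :
    evalL W (constLPE tp w) a =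
      {b | b = w ∧ ∃ d, W.adoc a = some d ∧ ∃ tr ∈ W.data d, matchesTP tp tr} := by
  rw [constLPE, evalL_sub_base]
  ext b
  simp only [Set.mem_setOf_eq]
  constructor
  · rintro ⟨d, hd, μ', hμ', hv⟩
    simp only [evalGP, Set.mem_setOf_eq] at hμ'
    obtain ⟨μ, hμ, hnone, rfl⟩ := hμ'
    obtain ⟨hdom, tr, htr, hinst⟩ := hμ
    have hval : munion μ (single (vfr tp) (.uri w)) (vfr tp) = some (.uri w) := by
      simp [munion, hnone, single]
    rw [hval] at hv
    obtain rfl : b = w := by injection hv with h; injection h with h2; exact h2.symm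
    exact ⟨rfl, d, hd, tr, htr, μ, hinst⟩
  · rintro ⟨rfl, d, hd, tr, htr, μ0, hinst⟩
    have hdom : mdom (restr tp μ0) = tp.varsOf := restr_mdom hinst
    have hinst' : tpInst (restr tp μ0) tp = some tr := (restr_tpInst tp μ0).trans hinst
    have hnone : restr tp μ0 (vfr tp) = none := mdom_none hdom
    refine ⟨d, hd, munion (restr tp μ0) (single (vfr tp) (.uri b)), ?_, ?_⟩
    · simp only [evalGP, Set.mem_setOf_eq]
      exact ⟨restr tp μ0, ⟨hdom, tr, htr, hinst'⟩, hnone, rfl⟩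
    · simp [munion, hnone, single]

lemma posLPE_sj_sub (W : Web) (tp : TriplePattern) (a : URI) :
    evalL W (posLPE tp tp.sj) a ⊆
      {b | ∃ d, W.adoc a = some d ∧ ∃ tr ∈ W.data d, matchesTP tp tr ∧ b ∈ urisOf tr} := by
  intro b hb
  cases hsj : tp.sj with
  | var v =>
    rw [hsj] at hb
    simp only [posLPE] at hb
    rw [evalL_sub_base] at hb
    obtain ⟨d, hd, μ, hμ, hv⟩ := hb
    obtain ⟨hdom, tr, htr, hinst⟩ := hμ
    obtain ⟨so, hso, hsub, -⟩ := tpInst_eq_some_iff.mp hinst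
    have h1 : so = .uri b := by
      rw [hsj] at hso; simp only [pval] at hso; rw [hso] at hv; exact Option.some.inj hv
    rw [h1] at hsub
    exact ⟨d, hd, tr, htr, ⟨μ, hinst⟩, Or.inl (subj_of_objToSubj hsub)⟩
  | term o =>
    rw [hsj] at hb
    cases o with
    | uri w =>
      simp only [posLPE] at hb
      rw [evalL_constLPE] at hb
      obtain ⟨rfl, d, hd, tr, htr, μ, hinst⟩ := hb
      obtain ⟨so, hso, hsub, -⟩ := tpInst_eq_some_iff.mp hinst
      have h1 : so = .uri b := by
        rw [hsj] at hso; simp only [pval] at hso; exact (Option.some.inj hso).symm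
      rw [h1] at hsub
      exact ⟨d, hd, tr, htr, ⟨μ, hinst⟩, Or.inl (subj_of_objToSubj hsub)⟩
    | bnode x => rw [show posLPE tp (.term (.bnode x)) = emptyLPE 0 from rfl,
        evalL_emptyLPE] at hb; exact absurd hb (Set.notMem_empty _)
    | lit x => rw [show posLPE tp (.term (.lit x)) = emptyLPE 0 from rfl,
        evalL_emptyLPE] at hb; exact absurd hb (Set.notMem_empty _)

lemma posLPE_pr_sub (W : Web) (tp : TriplePattern) (a : URI) :
    evalL W (posLPE tp tp.pr) a ⊆
      {b | ∃ d, W.adoc a = some d ∧ ∃ tr ∈ W.data d, matchesTP tp tr ∧ b ∈ urisOf tr} := by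
  intro b hb
  cases hpr : tp.pr with
  | var v =>
    rw [hpr] at hb
    simp only [posLPE] at hb
    rw [evalL_sub_base] at hb
    obtain ⟨d, hd, μ, hμ, hv⟩ := hb
    obtain ⟨hdom, tr, htr, hinst⟩ := hμ
    obtain ⟨so, hso, hsub, po, hpo, hpuri, -⟩ := tpInst_eq_some_iff.mp hinst
    have h1 : po = .uri b := by
      rw [hpr] at hpo; simp only [pval] at hpo; rw [hpo] at hv; exact Option.some.inj hv
    rw [h1] at hpuri
    exact ⟨d, hd, tr, htr, ⟨μ, hinst⟩, Or.inr (Or.inl (pred_of_objToURI hpuri))⟩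
  | term o =>
    rw [hpr] at hb
    cases o with
    | uri w =>
      simp only [posLPE] at hb
      rw [evalL_constLPE] at hb
      obtain ⟨rfl, d, hd, tr, htr, μ, hinst⟩ := hb
      obtain ⟨so, hso, hsub, po, hpo, hpuri, -⟩ := tpInst_eq_some_iff.mp hinst
      have h1 : po = .uri b := by
        rw [hpr] at hpo; simp only [pval] at hpo; exact (Option.some.inj hpo).symm
      rw [h1] at hpuri
      exact ⟨d, hd, tr, htr, ⟨μ, hinst⟩, Or.inr (Or.inl (pred_of_objToURI hpuri))⟩
    | bnode x => rw [show posLPE tp (.term (.bnode x)) = emptyLPE 0 from rfl,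
        evalL_emptyLPE] at hb; exact absurd hb (Set.notMem_empty _)
    | lit x => rw [show posLPE tp (.term (.lit x)) = emptyLPE 0 from rfl,
        evalL_emptyLPE] at hb; exact absurd hb (Set.notMem_empty _)

lemma posLPE_ob_sub (W : Web) (tp : TriplePattern) (a : URI) :
    evalL W (posLPE tp tp.ob) a ⊆
      {b | ∃ d, W.adoc a = some d ∧ ∃ tr ∈ W.data d, matchesTP tp tr ∧ b ∈ urisOf tr} := by
  intro b hb
  cases hob : tp.ob with
  | var v =>
    rw [hob] at hb
    simp only [posLPE] at hb
    rw [evalL_sub_base] at hb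
    obtain ⟨d, hd, μ, hμ, hv⟩ := hb
    obtain ⟨hdom, tr, htr, hinst⟩ := hμ
    obtain ⟨so, hso, hsub, po, hpo, hpuri, hoo⟩ := tpInst_eq_some_iff.mp hinst
    have h1 : tr.o = .uri b := by
      rw [hob] at hoo; simp only [pval] at hoo; rw [hoo] at hv; exact Option.some.inj hv
    exact ⟨d, hd, tr, htr, ⟨μ, hinst⟩, Or.inr (Or.inr h1)⟩
  | term o =>
    rw [hob] at hb
    cases o with
    | uri w =>
      simp only [posLPE] at hb
      rw [evalL_constLPE] at hb
      obtain ⟨rfl, d, hd, tr, htr, μ, hinst⟩ := hb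
      obtain ⟨so, hso, hsub, po, hpo, hpuri, hoo⟩ := tpInst_eq_some_iff.mp hinst
      have h1 : tr.o = .uri b := by
        rw [hob] at hoo; simp only [pval] at hoo; exact (Option.some.inj hoo).symm
      exact ⟨d, hd, tr, htr, ⟨μ, hinst⟩, Or.inr (Or.inr h1)⟩
    | bnode x => rw [show posLPE tp (.term (.bnode x)) = emptyLPE 0 from rfl,
        evalL_emptyLPE] at hb; exact absurd hb (Set.notMem_empty _)
    | lit x => rw [show posLPE tp (.term (.lit x)) = emptyLPE 0 from rfl,
        evalL_emptyLPE] at hb; exact absurd hb (Set.notMem_empty _)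
lemma tpLPE_complete (W : Web) (tp : TriplePattern) (a b : URI) (d : Doc)
    (hd : W.adoc a = some d) (tr : RDFTriple) (htr : tr ∈ W.data d) (μ0 : Mapping)
    (hinst0 : tpInst μ0 tp = some tr) (hb : b ∈ urisOf tr) :
    b ∈ evalL W (tpLPE tp) a := by
  set μ := restr tp μ0 with hμdef
  have hdom : mdom μ = tp.varsOf := restr_mdom hinst0
  have hinst : tpInst μ tp = some tr := (restr_tpInst tp μ0).trans hinst0
  have hμmem : μ ∈ evalGP (datasetW W {a}) (.tp tp) ↑(W.data d) := ⟨hdom, tr, htr, hinst⟩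
  obtain ⟨so, hso, hsub, po, hpo, hpuri, hoo⟩ := tpInst_eq_some_iff.mp hinst
  have hconst : ∀ w : URI, b = w → b ∈ evalL W (constLPE tp w) a := by
    rintro w rfl
    rw [evalL_constLPE]
    exact ⟨rfl, d, hd, tr, htr, μ0, hinst0⟩
  simp only [tpLPE, evalL, Set.mem_union]
  rcases hb with hb | hb | hb
  · left
    cases hsj : tp.sj with
    | var v =>
      simp only [posLPE]
      rw [evalL_sub_base]
      refine ⟨d, hd, μ, hμmem, ?_⟩
      have h2 : so = .uri b := by rw [hb] at hsub; exact objToSubj_eq_some_uri.mp hsub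
      rw [hsj] at hso; simp only [pval] at hso
      rw [hso, h2]
    | term o =>
      have h2 : o = .uri b := by
        rw [hsj] at hso; simp only [pval] at hso
        rw [hb] at hsub
        rw [Option.some.inj hso]
        exact objToSubj_eq_some_uri.mp hsub
      rw [h2]
      exact hconst b rfl
  · right; left
    cases hpr : tp.pr with
    | var v =>
      simp only [posLPE]
      rw [evalL_sub_base]
      refine ⟨d, hd, μ, hμmem, ?_⟩
      have h2 : po = .uri b := by rw [hb] at hpuri; exact objToURI_eq_some.mp hpuri
      rw [hpr] at hpo; simp only [pval] at hpo
      rw [hpo, h2]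
    | term o =>
      have h2 : o = .uri b := by
        rw [hpr] at hpo; simp only [pval] at hpo
        rw [hb] at hpuri
        rw [Option.some.inj hpo]
        exact objToURI_eq_some.mp hpuri
      rw [h2]
      exact hconst b rfl
  · right; right
    cases hob : tp.ob with
    | var v =>
      simp only [posLPE]
      rw [evalL_sub_base]
      refine ⟨d, hd, μ, hμmem, ?_⟩
      rw [hob] at hoo; simp only [pval] at hoo
      rw [hoo, hb]
    | term o =>
      have h2 : o = .uri b := by
        rw [hob] at hoo; simp only [pval] at hoo
        rw [Option.some.inj hoo]
        exact hb
      rw [h2]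
      exact hconst b rfl

lemma evalL_tpLPE (W : Web) (tp : TriplePattern) (a : URI) :
    evalL W (tpLPE tp) a =
      {b | ∃ d, W.adoc a = some d ∧ ∃ tr ∈ W.data d, matchesTP tp tr ∧ b ∈ urisOf tr} := by
  apply Set.Subset.antisymm
  · intro b hb
    simp only [tpLPE, evalL, Set.mem_union] at hb
    rcases hb with hb | hb | hb
    · exact posLPE_sj_sub W tp a hb
    · exact posLPE_pr_sub W tp a hb
    · exact posLPE_ob_sub W tp a hb
  · rintro b ⟨d, hd, tr, htr, ⟨μ0, hinst0⟩, hb⟩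
    exact tpLPE_complete W tp a b d hd tr htr μ0 hinst0 hb
lemma evalL_foldr (W : Web) (ls : List LPE) (u : URI) :
    evalL W (ls.foldr .alt (emptyLPE 0)) u = {b | ∃ l ∈ ls, b ∈ evalL W l u} := by
  induction ls with
  | nil => simp [evalL_emptyLPE]
  | cons l ls ih =>
    ext b
    simp only [List.foldr_cons, evalL, Set.mem_union, ih, Set.mem_setOf_eq, List.mem_cons]
    constructor
    · rintro (hb | ⟨l', hl', hb⟩)
      · exact ⟨l, Or.inl rfl, hb⟩
      · exact ⟨l', Or.inr hl', hb⟩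
    · rintro ⟨l', hl' | hl', hb⟩
      · exact Or.inl (hl' ▸ hb)
      · exact Or.inr ⟨l', hl', hb⟩

/-- The body of the LPE used for `c_Match`. -/
def lMBody (P : GP) : LPE := (P.tps.map tpLPE).foldr .alt (emptyLPE 0)

def lM (P : GP) : LPE := .star (lMBody P)

lemma evalL_lMBody (W : Web) (P : GP) (a : URI) :
    evalL W (lMBody P) a =
      {b | ∃ d, W.adoc a = some d ∧
        ∃ tr ∈ W.data d, (∃ tp ∈ P.tps, matchesTP tp tr) ∧ b ∈ urisOf tr} := by
  rw [lMBody, evalL_foldr]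
  ext b
  simp only [Set.mem_setOf_eq, List.mem_map]
  constructor
  · rintro ⟨l', ⟨tp, htp, rfl⟩, hb⟩
    rw [evalL_tpLPE] at hb
    obtain ⟨d, hd, tr, htr, hm, hu⟩ := hb
    exact ⟨d, hd, tr, htr, ⟨tp, htp, hm⟩, hu⟩
  · rintro ⟨d, hd, tr, htr, ⟨tp, htp, hm⟩, hu⟩
    exact ⟨tpLPE tp, ⟨tp, htp, rfl⟩, by rw [evalL_tpLPE]; exact ⟨d, hd, tr, htr, hm, hu⟩⟩

lemma cMatch_iff (t : RDFTriple) (u : URI) (P : GP) :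
    cMatch t u P ↔ ∃ tp ∈ P.tps, matchesTP tp t := by
  constructor
  · rintro ⟨μ, tp, htp, h⟩; exact ⟨tp, htp, μ, h⟩
  · rintro ⟨tp, htp, μ, h⟩; exact ⟨μ, tp, htp, h⟩

lemma reach_match (P : GP) (W : Web) (S : Set URI) :
    reachGraph W cMatch S P = (datasetW W {u' | ∃ u ∈ S, u' ∈ evalL W (lM P) u}).dflt := by
  have hmem : ∀ u u', u' ∈ evalL W (lM P) u ↔ (W.adoc u).isSome ∧
      Relation.ReflTransGen (fun a b => b ∈ evalL W (lMBody P) a) u u' := fun _ _ => Iff.rfl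
  ext t
  constructor
  · rintro ⟨d, hr, ht⟩
    suffices h : ∃ u ∈ S, (W.adoc u).isSome ∧ ∃ u',
        Relation.ReflTransGen (fun a b => b ∈ evalL W (lMBody P) a) u u' ∧
        W.adoc u' = some d by
      obtain ⟨u, hu, hs, u', hrt, ha⟩ := h
      exact ⟨u', ⟨u, hu, (hmem u u').mpr ⟨hs, hrt⟩⟩, d, ha, ht⟩
    clear ht
    induction hr with
    | seed u d hu ha => exact ⟨u, hu, by simp [ha], u, .refl, ha⟩
    | step dsrc t' u d hre hedge hc ih =>
      obtain ⟨u0, hu0, hs, u1, hrt, ha1⟩ := ih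
      refine ⟨u0, hu0, hs, u, hrt.tail ?_, hedge.2.2.2⟩
      rw [evalL_lMBody]
      exact ⟨dsrc, ha1, t', hedge.2.1, (cMatch_iff t' u P).mp hc, hedge.2.2.1⟩
  · rintro ⟨u', ⟨u, hu, he⟩, d, ha, ht⟩
    obtain ⟨hs, hrt⟩ := (hmem u u').mp he
    refine ⟨d, ?_, ht⟩
    clear ht
    have key : ∀ u'', Relation.ReflTransGen (fun a b => b ∈ evalL W (lMBody P) a) u u'' →
        ∀ d', W.adoc u'' = some d' → Reachable W cMatch S P d' := by
      intro u'' hrt'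
      induction hrt' with
      | refl => intro d' ha'; exact .seed u d' hu ha'
      | @tail b c h1 h2 ih =>
        intro d' ha'
        rw [evalL_lMBody] at h2
        obtain ⟨db, hab, tr, htr, hm, hcu⟩ := h2
        have hdb := ih db hab
        have hedge : W.edge db tr c d' := ⟨W.adoc_mem b db hab, htr, hcu, ha'⟩
        exact Reachable.step db tr c d' hdb hedge ((cMatch_iff tr c P).mpr hm)
    exact key u' hrt d ha

theorem reachability_expressible_in_LDQL' (c : ReachCrit)
    (hc : c = cAll ∨ c = cNone ∨ c = cMatch) (P : GP) :
    ∃ q : LDQL, ∀ (W : Web) (S : Set URI), S.Finite →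
      reachEval W c S P = evalQ W q S := by
  rcases hc with rfl | rfl | rfl
  · exact ⟨.base lAll (strip P), main_red cAll P lAll (reach_all P)⟩
  · exact ⟨.base .eps (strip P), main_red cNone P .eps (reach_none P)⟩
  · exact ⟨.base (lM P) (strip P), main_red cMatch P (lM P) (reach_match P)⟩

/-- For `c ∈ {c_All, c_None, c_Match}`, every SPARQL graph
pattern under `c`-semantics can be expressed as an LDQL query. -/
theorem reachability_expressible_in_LDQL (c : ReachCrit)
    (hc : c = cAll ∨ c = cNone ∨ c = cMatch) (P : GP) :
    ∃ q : LDQL, ∀ (W : Web) (S : Set URI), S.Finite →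
      reachEval W c S P = evalQ W q S := by
  exact reachability_expressible_in_LDQL' c hc P

end

end LDQLFormal
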